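/- Let v ∈ L²((0,π), ℂ) and define F(λ) = ∫₀^π (sin λ(π−x)/λ) (∫₀^x cos(λt) v(t) dt) conj(v(x)) dx. Then for every λ ∈ ℂ with λ ≠ 0, F(λ) + F*(λ) = (1/(4iλ))·[ (Φ(λ) − Φ(−λ))(e^{iλπ} + e^{-iλπ}) + (ṽ(λ) + ṽ(−λ))(e^{iλπ} ṽ*(−λ) − e^{-iλπ} ṽ*(λ)) ]. -/

import Mathlib

open MeasureTheory intervalIntegral

namespace Stmt3Aux

open Set

local notation "μπ" => volume.restrict (Set.Ioc (0:ℝ) Real.pi)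

lemma conj_intervalIntegral (f : ℝ → ℂ) (a b : ℝ) :
    (starRingEnd ℂ) (∫ x in a..b, f x) = ∫ x in a..b, (starRingEnd ℂ) (f x) := by
  rw [intervalIntegral, intervalIntegral, map_sub, ← integral_conj, ← integral_conj]

lemma cont_mul_integrable {ψ w : ℝ → ℂ} (hψ : ContinuousOn ψ (Icc 0 Real.pi))
    (hw : Integrable w μπ) : Integrable (fun x => ψ x * w x) μπ := by
  obtain ⟨C, hC⟩ := isCompact_Icc.exists_bound_of_continuousOn hψ
  refine Integrable.bdd_mul (c := C) hw
    ((hψ.mono Ioc_subset_Icc_self).aestronglyMeasurable measurableSet_Ioc) ?_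
  filter_upwards [ae_restrict_mem measurableSet_Ioc] with x hx
  exact hC x ⟨hx.1.le, hx.2⟩

lemma aux_intInt {ψ w : ℝ → ℂ} (hψ : ContinuousOn ψ (Icc 0 Real.pi))
    (hw : Integrable w μπ) {x y : ℝ} (hx : 0 ≤ x) (hxy : x ≤ y) (hy : y ≤ Real.pi) :
    IntervalIntegrable (fun t => ψ t * w t) volume x y := by
  have h : IntegrableOn (fun t => ψ t * w t) (Set.Ioc 0 Real.pi) volume :=
    cont_mul_integrable hψ hw
  rw [intervalIntegrable_iff, uIoc_of_le hxy]
  exact h.mono_set (Ioc_subset_Ioc hx hy)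

lemma contOn_primitive {g : ℝ → ℂ} (hg : Integrable g μπ) :
    ContinuousOn (fun x => ∫ t in (0:ℝ)..x, g t) (Icc 0 Real.pi) := by
  have h : IntegrableOn g (uIcc 0 Real.pi) volume := by
    rw [uIcc_of_le Real.pi_pos.le, integrableOn_Icc_iff_integrableOn_Ioc]
    exact hg
  simpa [uIcc_of_le Real.pi_pos.le] using continuousOn_primitive_interval h

lemma intInt_of_integrable {g : ℝ → ℂ} (hg : Integrable g μπ) {x y : ℝ}
    (hx : 0 ≤ x) (hxy : x ≤ y) (hy : y ≤ Real.pi) :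
    IntervalIntegrable g volume x y := by
  have hg' : IntegrableOn g (Set.Ioc 0 Real.pi) volume := hg
  rw [intervalIntegrable_iff, uIoc_of_le hxy]
  exact hg'.mono_set (Ioc_subset_Ioc hx hy)

lemma mul_integral_eq {g h : ℝ → ℂ} (hg : Integrable g μπ) (hh : Integrable h μπ) :
    (∫ x in (0:ℝ)..Real.pi, g x) * (∫ x in (0:ℝ)..Real.pi, h x)
      = (∫ x in (0:ℝ)..Real.pi, g x * ∫ t in (0:ℝ)..x, h t)
        + (∫ x in (0:ℝ)..Real.pi, h x * ∫ t in (0:ℝ)..x, g t) := by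
  have hp0 : (0:ℝ) ≤ Real.pi := Real.pi_pos.le
  set F : ℝ → ℝ → ℂ := fun x t => if t < x then g x * h t else 0 with hF
  have hFint : Integrable (Function.uncurry F) ((μπ).prod μπ) := by
    have : Function.uncurry F
        = Set.indicator {z : ℝ × ℝ | z.2 < z.1} (fun z => g z.1 * h z.2) := by
      funext z
      by_cases hz : z.2 < z.1 <;> simp [Function.uncurry, hF, hz, Set.indicator]
    rw [this]
    exact (hg.mul_prod hh).indicator (measurableSet_lt measurable_snd measurable_fst)
  have hswap : ∫ x, ∫ t, F x t ∂μπ ∂μπ = ∫ t, ∫ x, F x t ∂μπ ∂μπ :=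
    integral_integral_swap hFint
  have h1 : ∫ x, ∫ t, F x t ∂μπ ∂μπ = ∫ x, g x * ∫ t in (0:ℝ)..x, h t ∂volume ∂μπ := by
    refine integral_congr_ae ?_
    filter_upwards [ae_restrict_mem measurableSet_Ioc] with x hx
    have e1 : (fun t => F x t) = fun t => g x * (Set.indicator (Set.Iio x) h t) := by
      funext t
      by_cases ht : t < x <;> simp [hF, ht, Set.indicator]
    rw [e1, MeasureTheory.integral_const_mul, MeasureTheory.integral_indicator measurableSet_Iio,
      Measure.restrict_restrict measurableSet_Iio]
    have e2 : Set.Iio x ∩ Set.Ioc 0 Real.pi = Set.Ioo 0 x := by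
      ext t
      simp only [mem_inter_iff, mem_Iio, mem_Ioc, mem_Ioo]
      exact ⟨fun ⟨a, b, c⟩ => ⟨b, a⟩, fun ⟨a, b⟩ => ⟨b, a, le_trans b.le hx.2⟩⟩
    rw [e2, ← integral_Ioc_eq_integral_Ioo, ← intervalIntegral.integral_of_le hx.1.le]
  have h2 : ∫ t, ∫ x, F x t ∂μπ ∂μπ
      = ∫ t, h t * ((∫ x in (0:ℝ)..Real.pi, g x) - ∫ x in (0:ℝ)..t, g x) ∂μπ := by
    refine integral_congr_ae ?_
    filter_upwards [ae_restrict_mem measurableSet_Ioc] with t ht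
    have e1 : (fun x => F x t) = fun x => h t * (Set.indicator (Set.Ioi t) g x) := by
      funext x
      by_cases hx : t < x <;> simp [hF, hx, Set.indicator, mul_comm]
    rw [e1, MeasureTheory.integral_const_mul, MeasureTheory.integral_indicator measurableSet_Ioi,
      Measure.restrict_restrict measurableSet_Ioi]
    have e2 : Set.Ioi t ∩ Set.Ioc 0 Real.pi = Set.Ioc t Real.pi := by
      ext x
      simp only [mem_inter_iff, mem_Ioi, mem_Ioc]
      exact ⟨fun ⟨a, _, c⟩ => ⟨a, c⟩, fun ⟨a, b⟩ => ⟨a, lt_trans ht.1 a, b⟩⟩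
    rw [e2, ← intervalIntegral.integral_of_le ht.2,
      ← intervalIntegral.integral_interval_sub_left
        (intInt_of_integrable hg le_rfl hp0 le_rfl)
        (intInt_of_integrable hg le_rfl ht.1.le ht.2)]
  rw [h1, h2] at hswap
  have h3 : ∫ t, h t * ((∫ x in (0:ℝ)..Real.pi, g x) - ∫ x in (0:ℝ)..t, g x) ∂μπ
      = (∫ t, h t ∂μπ) * (∫ x in (0:ℝ)..Real.pi, g x)
        - ∫ t, h t * (∫ x in (0:ℝ)..t, g x) ∂μπ := by
    have e1 : (fun t => h t * ((∫ x in (0:ℝ)..Real.pi, g x) - ∫ x in (0:ℝ)..t, g x))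
        = fun t => h t * (∫ x in (0:ℝ)..Real.pi, g x) - h t * ∫ x in (0:ℝ)..t, g x := by
      funext t; ring
    rw [e1, integral_sub (hh.mul_const _)]
    · rw [MeasureTheory.integral_mul_const]
    · have := cont_mul_integrable (contOn_primitive hg) hh
      simpa [mul_comm] using this
  rw [h3] at hswap
  simp only [intervalIntegral.integral_of_le hp0] at hswap ⊢
  linear_combination -hswap

lemma key1 (l a : ℂ) :
    Complex.exp (-Complex.I * l * a) - Complex.exp (-Complex.I * -l * a)
      = -2 * Complex.I * Complex.sin (l * a) := by
  have h1 : -Complex.I * l * a = -(l * a) * Complex.I := by ring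
  have h2 : -Complex.I * -l * a = l * a * Complex.I := by ring
  rw [h1, h2, Complex.sin]
  linear_combination (Complex.exp (-(l*a) * Complex.I) - Complex.exp (l*a*Complex.I)) * Complex.I_sq

lemma key2 (l a b : ℂ) :
    Complex.exp (Complex.I * l * b) * Complex.exp (-Complex.I * l * a)
      - Complex.exp (-Complex.I * l * b) * Complex.exp (Complex.I * l * a)
      = 2 * Complex.I * Complex.sin (l * (b - a)) := by
  rw [← Complex.exp_add, ← Complex.exp_add, Complex.sin]
  have h1 : Complex.I * l * b + -Complex.I * l * a = l * (b - a) * Complex.I := by ring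
  have h2 : -Complex.I * l * b + Complex.I * l * a = -(l * (b - a)) * Complex.I := by ring
  rw [h1, h2]
  linear_combination (Complex.exp (l*(b-a)*Complex.I) - Complex.exp (-(l*(b-a))*Complex.I)) * Complex.I_sq

lemma key3 (l a : ℂ) :
    Complex.exp (-Complex.I * l * a) + Complex.exp (-Complex.I * -l * a)
      = 2 * Complex.cos (l * a) := by
  have h1 : -Complex.I * l * a = -(l * a) * Complex.I := by ring
  have h2 : -Complex.I * -l * a = l * a * Complex.I := by ring
  rw [h1, h2, Complex.cos]; ring

lemma key3' (l a : ℂ) :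
    Complex.exp (Complex.I * l * a) + Complex.exp (-Complex.I * l * a)
      = 2 * Complex.cos (l * a) := by
  have h1 : Complex.I * l * a = l * a * Complex.I := by ring
  have h2 : -Complex.I * l * a = -(l * a) * Complex.I := by ring
  rw [h1, h2, Complex.cos]; ring

lemma key4 (l x t p : ℂ) :
    Complex.cos (l * x) * Complex.sin (l * (p - t)) - Complex.cos (l * p) * Complex.sin (l * (x - t))
      = Complex.sin (l * (p - x)) * Complex.cos (l * t) := by
  have h1 : l * (p - t) = l * p - l * t := by ring
  have h2 : l * (x - t) = l * x - l * t := by ring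
  have h3 : l * (p - x) = l * p - l * x := by ring
  rw [h1, h2, h3, Complex.sin_sub, Complex.sin_sub, Complex.sin_sub]
  ring

lemma key5 (l x t : ℂ) :
    Complex.sin (l * (x - t)) = Complex.sin (l * x) * Complex.cos (l * t)
      - Complex.cos (l * x) * Complex.sin (l * t) := by
  have h : l * (x - t) = l * x - l * t := by ring
  rw [h, Complex.sin_sub]

lemma key6 (l x t : ℂ) :
    Complex.exp (-Complex.I * l * (x - t))
      = Complex.exp (-Complex.I * l * x) * Complex.exp (Complex.I * l * t) := by
  rw [← Complex.exp_add]; ring_nf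

end Stmt3Aux

open Set Stmt3Aux

/-- Fourier transform `ṽ(λ) = ∫₀^π e^{-iλx} v(x) dx`. -/
noncomputable def ftilde (v : ℝ → ℂ) (l : ℂ) : ℂ :=
  ∫ x in (0:ℝ)..Real.pi, Complex.exp (-Complex.I * l * x) * v x

/-- `Φ(λ) = ∫₀^π (∫₀^x e^{-iλ(x−t)} conj(v(t)) dt) v(x) dx`. -/
noncomputable def PhiFun (v : ℝ → ℂ) (l : ℂ) : ℂ :=
  ∫ x in (0:ℝ)..Real.pi,
    (∫ t in (0:ℝ)..x, Complex.exp (-Complex.I * l * (x - t)) * (starRingEnd ℂ) (v t)) * v x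

/-- `F(λ) = ∫₀^π (sin λ(π−x)/λ) (∫₀^x cos(λt) v(t) dt) conj(v(x)) dx`. -/
noncomputable def Ffun (v : ℝ → ℂ) (l : ℂ) : ℂ :=
  ∫ x in (0:ℝ)..Real.pi,
    (Complex.sin (l * ((Real.pi : ℂ) - x)) / l)
      * (∫ t in (0:ℝ)..x, Complex.cos (l * t) * v t) * (starRingEnd ℂ) (v x)

theorem stmt3 (v : ℝ → ℂ)
    (hv : MemLp v 2 (volume.restrict (Set.Ioo (0:ℝ) Real.pi)))
    (l : ℂ) (hl : l ≠ 0) :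
    Ffun v l + (starRingEnd ℂ) (Ffun v ((starRingEnd ℂ) l))
      = (1 / (4 * Complex.I * l)) *
        ((PhiFun v l - PhiFun v (-l)) *
            (Complex.exp (Complex.I * l * Real.pi) + Complex.exp (-Complex.I * l * Real.pi))
          + (ftilde v l + ftilde v (-l)) *
            (Complex.exp (Complex.I * l * Real.pi)
                * (starRingEnd ℂ) (ftilde v ((starRingEnd ℂ) (-l)))
              - Complex.exp (-Complex.I * l * Real.pi)
                * (starRingEnd ℂ) (ftilde v ((starRingEnd ℂ) l)))) := by
  have hp0 : (0:ℝ) ≤ Real.pi := Real.pi_pos.le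
  -- basic integrability of v and its conjugate
  haveI : IsFiniteMeasure (volume.restrict (Set.Ioo (0:ℝ) Real.pi)) := by
    constructor
    rw [Measure.restrict_apply_univ]
    exact measure_Ioo_lt_top
  have hvμ : Integrable v (volume.restrict (Set.Ioc (0:ℝ) Real.pi)) := by
    have h1 : Integrable v (volume.restrict (Set.Ioo (0:ℝ) Real.pi)) := hv.integrable one_le_two
    rwa [Measure.restrict_congr_set Ioo_ae_eq_Ioc] at h1
  have hwμ : Integrable (fun x => (starRingEnd ℂ) (v x))
      (volume.restrict (Set.Ioc (0:ℝ) Real.pi)) := by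
    have := ContinuousLinearMap.integrable_comp
      (Complex.conjCLE : ℂ ≃L[ℝ] ℂ).toContinuousLinearMap hvμ
    simpa [Complex.conjCLE_apply] using this
  -- continuous coefficient functions
  have ccos : Continuous fun x : ℝ => Complex.cos (l * ↑x) :=
    Complex.continuous_cos.comp (continuous_const.mul Complex.continuous_ofReal)
  have csin : Continuous fun x : ℝ => Complex.sin (l * ↑x) :=
    Complex.continuous_sin.comp (continuous_const.mul Complex.continuous_ofReal)
  have cS : Continuous fun x : ℝ => Complex.sin (l * ((Real.pi : ℂ) - ↑x)) :=
    Complex.continuous_sin.comp (continuous_const.mul (continuous_const.sub Complex.continuous_ofReal))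
  have cexp : ∀ c : ℂ, Continuous fun x : ℝ => Complex.exp (c * ↑x) := fun c =>
    Complex.continuous_exp.comp (continuous_const.mul Complex.continuous_ofReal)
  -- integrable products
  have hcv := cont_mul_integrable ccos.continuousOn hvμ
  have hcw := cont_mul_integrable ccos.continuousOn hwμ
  have hsw := cont_mul_integrable csin.continuousOn hwμ
  have hSw := cont_mul_integrable cS.continuousOn hwμ
  have hEpw := cont_mul_integrable (cexp (Complex.I * l)).continuousOn hwμ
  have hEmw := cont_mul_integrable (cexp (-Complex.I * l)).continuousOn hwμ
  have hEpv := cont_mul_integrable (cexp (Complex.I * l)).continuousOn hvμ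
  have hEmv := cont_mul_integrable (cexp (-Complex.I * l)).continuousOn hvμ
  -- C1
  have C1 : Ffun v l = l⁻¹ * ∫ x in (0:ℝ)..Real.pi,
      Complex.sin (l * ((Real.pi : ℂ) - ↑x)) * (∫ t in (0:ℝ)..x, Complex.cos (l * ↑t) * v t)
        * (starRingEnd ℂ) (v x) := by
    rw [Ffun, ← intervalIntegral.integral_const_mul]
    refine intervalIntegral.integral_congr fun x hx => ?_
    ring
  -- C2
  have C2 : (starRingEnd ℂ) (Ffun v ((starRingEnd ℂ) l)) = l⁻¹ * ∫ x in (0:ℝ)..Real.pi,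
      Complex.sin (l * ((Real.pi : ℂ) - ↑x))
        * (∫ t in (0:ℝ)..x, Complex.cos (l * ↑t) * (starRingEnd ℂ) (v t)) * v x := by
    have hinner : ∀ x : ℝ, (starRingEnd ℂ)
        (∫ t in (0:ℝ)..x, Complex.cos ((starRingEnd ℂ) l * ↑t) * v t)
        = ∫ t in (0:ℝ)..x, Complex.cos (l * ↑t) * (starRingEnd ℂ) (v t) := by
      intro x
      rw [conj_intervalIntegral]
      refine intervalIntegral.integral_congr fun t ht => ?_
      rw [map_mul, ← Complex.cos_conj, map_mul, Complex.conj_conj, Complex.conj_ofReal]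
    rw [Ffun, conj_intervalIntegral, ← intervalIntegral.integral_const_mul]
    refine intervalIntegral.integral_congr fun x hx => ?_
    rw [map_mul, map_mul, map_div₀, ← Complex.sin_conj, map_mul, Complex.conj_conj,
      map_sub, Complex.conj_ofReal, Complex.conj_ofReal, hinner, Complex.conj_conj]
    ring
  -- C3
  have hΦcont : ∀ c : ℂ, ContinuousOn (fun x : ℝ =>
      ∫ t in (0:ℝ)..x, Complex.exp (-Complex.I * c * (↑x - ↑t)) * (starRingEnd ℂ) (v t))
      (Icc 0 Real.pi) := by
    intro c
    refine ContinuousOn.congr (f := fun x : ℝ => Complex.exp (-Complex.I * c * ↑x) *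
        ∫ t in (0:ℝ)..x, Complex.exp (Complex.I * c * ↑t) * (starRingEnd ℂ) (v t)) ?_ ?_
    · exact (cexp (-Complex.I * c)).continuousOn.mul
        (contOn_primitive (cont_mul_integrable (cexp (Complex.I * c)).continuousOn hwμ))
    · intro x hx
      dsimp only
      rw [← intervalIntegral.integral_const_mul]
      refine intervalIntegral.integral_congr fun t ht => ?_
      rw [key6]
      ring
  have hΦ1 : IntervalIntegrable (fun x =>
      (∫ t in (0:ℝ)..x, Complex.exp (-Complex.I * l * (↑x - ↑t)) * (starRingEnd ℂ) (v t)) * v x)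
      volume 0 Real.pi :=
    aux_intInt (hΦcont l) hvμ le_rfl hp0 le_rfl
  have hΦ2 : IntervalIntegrable (fun x =>
      (∫ t in (0:ℝ)..x, Complex.exp (-Complex.I * -l * (↑x - ↑t)) * (starRingEnd ℂ) (v t)) * v x)
      volume 0 Real.pi :=
    aux_intInt (hΦcont (-l)) hvμ le_rfl hp0 le_rfl
  have C3 : PhiFun v l - PhiFun v (-l) = (-2 * Complex.I) * ∫ x in (0:ℝ)..Real.pi,
      (∫ t in (0:ℝ)..x, Complex.sin (l * (↑x - ↑t)) * (starRingEnd ℂ) (v t)) * v x := by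
    rw [PhiFun, PhiFun, ← intervalIntegral.integral_sub hΦ1 hΦ2,
      ← intervalIntegral.integral_const_mul]
    refine intervalIntegral.integral_congr fun x hx => ?_
    rw [uIcc_of_le hp0] at hx
    have hsub : (∫ t in (0:ℝ)..x, Complex.exp (-Complex.I * l * (↑x - ↑t)) * (starRingEnd ℂ) (v t))
        - (∫ t in (0:ℝ)..x, Complex.exp (-Complex.I * -l * (↑x - ↑t)) * (starRingEnd ℂ) (v t))
        = (-2 * Complex.I) * ∫ t in (0:ℝ)..x, Complex.sin (l * (↑x - ↑t)) * (starRingEnd ℂ) (v t) := by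
      rw [← intervalIntegral.integral_sub
        (aux_intInt (ψ := fun t : ℝ => Complex.exp (-Complex.I * l * (↑x - ↑t)))
          (Continuous.continuousOn (by fun_prop)) hwμ le_rfl hx.1 hx.2)
        (aux_intInt (ψ := fun t : ℝ => Complex.exp (-Complex.I * -l * (↑x - ↑t)))
          (Continuous.continuousOn (by fun_prop)) hwμ le_rfl hx.1 hx.2),
        ← intervalIntegral.integral_const_mul]
      refine intervalIntegral.integral_congr fun t ht => ?_
      linear_combination ((starRingEnd ℂ) (v t)) * key1 l (↑x - ↑t)
    linear_combination (v x) * hsub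
  -- C4
  have C4 : ftilde v l + ftilde v (-l)
      = 2 * ∫ x in (0:ℝ)..Real.pi, Complex.cos (l * ↑x) * v x := by
    rw [ftilde, ftilde, ← intervalIntegral.integral_add
      (aux_intInt (cexp (-Complex.I * l)).continuousOn hvμ le_rfl hp0 le_rfl)
      (aux_intInt (cexp (-Complex.I * -l)).continuousOn hvμ le_rfl hp0 le_rfl),
      ← intervalIntegral.integral_const_mul]
    refine intervalIntegral.integral_congr fun x hx => ?_
    linear_combination (v x) * key3 l ↑x
  -- C5
  have e5a : (starRingEnd ℂ) (ftilde v ((starRingEnd ℂ) (-l)))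
      = ∫ x in (0:ℝ)..Real.pi, Complex.exp (-Complex.I * l * ↑x) * (starRingEnd ℂ) (v x) := by
    rw [ftilde, conj_intervalIntegral]
    refine intervalIntegral.integral_congr fun x hx => ?_
    rw [map_mul]
    congr 1
    rw [← Complex.exp_conj]
    congr 1
    rw [map_mul, map_mul, Complex.conj_conj, Complex.conj_ofReal, map_neg, Complex.conj_I]
    ring
  have e5b : (starRingEnd ℂ) (ftilde v ((starRingEnd ℂ) l))
      = ∫ x in (0:ℝ)..Real.pi, Complex.exp (Complex.I * l * ↑x) * (starRingEnd ℂ) (v x) := by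
    rw [ftilde, conj_intervalIntegral]
    refine intervalIntegral.integral_congr fun x hx => ?_
    rw [map_mul]
    congr 1
    rw [← Complex.exp_conj]
    congr 1
    rw [map_mul, map_mul, Complex.conj_conj, Complex.conj_ofReal, map_neg, Complex.conj_I]
    ring
  have C5 : Complex.exp (Complex.I * l * Real.pi)
        * (starRingEnd ℂ) (ftilde v ((starRingEnd ℂ) (-l)))
      - Complex.exp (-Complex.I * l * Real.pi)
        * (starRingEnd ℂ) (ftilde v ((starRingEnd ℂ) l))
      = (2 * Complex.I) * ∫ x in (0:ℝ)..Real.pi,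
          Complex.sin (l * ((Real.pi : ℂ) - ↑x)) * (starRingEnd ℂ) (v x) := by
    rw [e5a, e5b, ← intervalIntegral.integral_const_mul, ← intervalIntegral.integral_const_mul,
      ← intervalIntegral.integral_sub
        ((aux_intInt (cexp (-Complex.I * l)).continuousOn hwμ le_rfl hp0 le_rfl).const_mul _)
        ((aux_intInt (cexp (Complex.I * l)).continuousOn hwμ le_rfl hp0 le_rfl).const_mul _),
      ← intervalIntegral.integral_const_mul]
    refine intervalIntegral.integral_congr fun x hx => ?_
    linear_combination ((starRingEnd ℂ) (v x)) * key2 l ↑x ↑Real.pi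
  -- C6
  have C6 : (∫ x in (0:ℝ)..Real.pi, Complex.cos (l * ↑x) * v x)
        * (∫ x in (0:ℝ)..Real.pi, Complex.sin (l * ((Real.pi : ℂ) - ↑x)) * (starRingEnd ℂ) (v x))
      = (∫ x in (0:ℝ)..Real.pi, Complex.cos (l * ↑x) * v x
          * ∫ t in (0:ℝ)..x, Complex.sin (l * ((Real.pi : ℂ) - ↑t)) * (starRingEnd ℂ) (v t))
        + (∫ x in (0:ℝ)..Real.pi, Complex.sin (l * ((Real.pi : ℂ) - ↑x)) * (starRingEnd ℂ) (v x)
          * ∫ t in (0:ℝ)..x, Complex.cos (l * ↑t) * v t) :=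
    mul_integral_eq hcv hSw
  have e6 : (∫ x in (0:ℝ)..Real.pi, Complex.sin (l * ((Real.pi : ℂ) - ↑x)) * (starRingEnd ℂ) (v x)
        * ∫ t in (0:ℝ)..x, Complex.cos (l * ↑t) * v t)
      = ∫ x in (0:ℝ)..Real.pi, Complex.sin (l * ((Real.pi : ℂ) - ↑x))
        * (∫ t in (0:ℝ)..x, Complex.cos (l * ↑t) * v t) * (starRingEnd ℂ) (v x) :=
    intervalIntegral.integral_congr fun x hx => by ring
  rw [e6] at C6
  -- C7
  have hPcont : ContinuousOn (fun x : ℝ =>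
      ∫ t in (0:ℝ)..x, Complex.sin (l * (↑x - ↑t)) * (starRingEnd ℂ) (v t)) (Icc 0 Real.pi) := by
    refine ContinuousOn.congr (f := fun x : ℝ =>
        Complex.sin (l * ↑x) * (∫ t in (0:ℝ)..x, Complex.cos (l * ↑t) * (starRingEnd ℂ) (v t))
        - Complex.cos (l * ↑x) * ∫ t in (0:ℝ)..x, Complex.sin (l * ↑t) * (starRingEnd ℂ) (v t)) ?_ ?_
    · exact (csin.continuousOn.mul (contOn_primitive hcw)).sub
        (ccos.continuousOn.mul (contOn_primitive hsw))
    · intro x hx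
      dsimp only
      rw [← intervalIntegral.integral_const_mul, ← intervalIntegral.integral_const_mul,
        ← intervalIntegral.integral_sub
          ((aux_intInt ccos.continuousOn hwμ le_rfl hx.1 hx.2).const_mul _)
          ((aux_intInt csin.continuousOn hwμ le_rfl hx.1 hx.2).const_mul _)]
      refine intervalIntegral.integral_congr fun t ht => ?_
      linear_combination ((starRingEnd ℂ) (v t)) * key5 l ↑x ↑t
  have hY : IntervalIntegrable (fun x => Complex.cos (l * ↑x) * v x
      * ∫ t in (0:ℝ)..x, Complex.sin (l * ((Real.pi:ℂ) - ↑t)) * (starRingEnd ℂ) (v t))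
      volume 0 Real.pi := by
    have h := aux_intInt (ψ := fun x => Complex.cos (l * ↑x)
        * ∫ t in (0:ℝ)..x, Complex.sin (l * ((Real.pi:ℂ) - ↑t)) * (starRingEnd ℂ) (v t))
      (ccos.continuousOn.mul (contOn_primitive hSw)) hvμ le_rfl hp0 le_rfl
    have e : (fun x : ℝ => (Complex.cos (l * ↑x)
        * ∫ t in (0:ℝ)..x, Complex.sin (l * ((Real.pi:ℂ) - ↑t)) * (starRingEnd ℂ) (v t)) * v x)
        = fun x => Complex.cos (l * ↑x) * v x
        * ∫ t in (0:ℝ)..x, Complex.sin (l * ((Real.pi:ℂ) - ↑t)) * (starRingEnd ℂ) (v t) := by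
      funext x; ring
    rwa [e] at h
  have hP : IntervalIntegrable (fun x =>
      (∫ t in (0:ℝ)..x, Complex.sin (l * (↑x - ↑t)) * (starRingEnd ℂ) (v t)) * v x)
      volume 0 Real.pi := aux_intInt hPcont hvμ le_rfl hp0 le_rfl
  have C7 : (∫ x in (0:ℝ)..Real.pi, Complex.cos (l * ↑x) * v x
        * ∫ t in (0:ℝ)..x, Complex.sin (l * ((Real.pi:ℂ) - ↑t)) * (starRingEnd ℂ) (v t))
      - Complex.cos (l * ↑Real.pi) * (∫ x in (0:ℝ)..Real.pi,
        (∫ t in (0:ℝ)..x, Complex.sin (l * (↑x - ↑t)) * (starRingEnd ℂ) (v t)) * v x)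
      = ∫ x in (0:ℝ)..Real.pi, Complex.sin (l * ((Real.pi:ℂ) - ↑x))
        * (∫ t in (0:ℝ)..x, Complex.cos (l * ↑t) * (starRingEnd ℂ) (v t)) * v x := by
    rw [← intervalIntegral.integral_const_mul, ← intervalIntegral.integral_sub hY (hP.const_mul _)]
    refine intervalIntegral.integral_congr fun x hx => ?_
    rw [uIcc_of_le hp0] at hx
    have hinner : Complex.cos (l * ↑x)
        * (∫ t in (0:ℝ)..x, Complex.sin (l * ((Real.pi:ℂ) - ↑t)) * (starRingEnd ℂ) (v t))
        - Complex.cos (l * ↑Real.pi)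
        * (∫ t in (0:ℝ)..x, Complex.sin (l * (↑x - ↑t)) * (starRingEnd ℂ) (v t))
        = Complex.sin (l * ((Real.pi:ℂ) - ↑x))
        * ∫ t in (0:ℝ)..x, Complex.cos (l * ↑t) * (starRingEnd ℂ) (v t) := by
      rw [← intervalIntegral.integral_const_mul, ← intervalIntegral.integral_const_mul,
        ← intervalIntegral.integral_sub
          ((aux_intInt cS.continuousOn hwμ le_rfl hx.1 hx.2).const_mul _)
          ((aux_intInt (ψ := fun t : ℝ => Complex.sin (l * (↑x - ↑t)))
            (Continuous.continuousOn (by fun_prop)) hwμ le_rfl hx.1 hx.2).const_mul _),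
        ← intervalIntegral.integral_const_mul]
      refine intervalIntegral.integral_congr fun t ht => ?_
      linear_combination ((starRingEnd ℂ) (v t)) * key4 l ↑x ↑t ↑Real.pi
    linear_combination (v x) * hinner
  -- assemble
  rw [C1, C2, C3, C4, C5, key3' l (Real.pi : ℂ)]
  have h4 : (4:ℂ) * Complex.I * l ≠ 0 := by
    simp [hl, Complex.I_ne_zero]
  field_simp
  linear_combination (-(4:ℂ)) * C6 + (-(4:ℂ)) * C7
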